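/- (Theorem 3.2(c), Euclidean case.) Let p̄ ∈ F and suppose ψ_u : E → ℝ (u = 1,…,t) are convex at p̄ and directionally differentiable at p̄. Suppose the interval-valued objectives φ_s (s = 1,…,l) are CW-convex at p̄ and weakly directionally differentiable at p̄, and that there exist scalars λ_s^L > 0, λ_s^U > 0 (s = 1,…,l) and μ_u ≥ 0 (u = 1,…,t) such that: (v) λ_s^L < λ_s^U for every s; (vi) for all p ∈ E, Σ_{s=1}^l λ_s^L (φ_s^L)'(p̄; p − p̄) + Σ_{s=1}^l λ_s^U (φ_s^U)'(p̄; p − p̄) + Σ_{u=1}^t μ_u ψ_u'(p̄; p − p̄) ≥ 0; and (vii) μ_u ψ_u(p̄) = 0 for all u. Then p̄ is a type-II Pareto optimal solution of (MIVOP2). -/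
import Mathlib


/-- One-sided directional derivative of `f` at `p` in direction `w`, with value `d`. -/
def HasDirDeriv {V : Type*} [NormedAddCommGroup V] [NormedSpace ℝ V]
    (f : V → ℝ) (p w : V) (d : ℝ) : Prop :=
  Filter.Tendsto (fun α : ℝ => (f (p + α • w) - f p) / α)
    (nhdsWithin 0 (Set.Ioi 0)) (nhds d)

/-- `f` is convex at the point `p` (relative to the convex set `E`). -/
def ConvexAtPt {V : Type*} [NormedAddCommGroup V] [NormedSpace ℝ V]
    (E : Set V) (f : V → ℝ) (p : V) : Prop :=
  ∀ q ∈ E, ∀ α : ℝ, 0 ≤ α → α ≤ 1 →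
    f ((1 - α) • p + α • q) ≤ (1 - α) * f p + α * f q

/-- `f` (with directional-derivative function `f'` at `pbar`) is pseudo-convex at `pbar`. -/
def PseudoConvexAt {V : Type*} [NormedAddCommGroup V] [NormedSpace ℝ V]
    (E : Set V) (f : V → ℝ) (f' : V → ℝ) (pbar : V) : Prop :=
  ∀ p ∈ E, f p < f pbar → f' (p - pbar) < 0

/-- `f` (with directional-derivative function `f'` at `pbar`) is strictly
pseudo-convex at `pbar`. -/
def StrictPseudoConvexAt {V : Type*} [NormedAddCommGroup V] [NormedSpace ℝ V]
    (E : Set V) (f : V → ℝ) (f' : V → ℝ) (pbar : V) : Prop :=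
  ∀ p ∈ E, p ≠ pbar → f p ≤ f pbar → f' (p - pbar) < 0

/-- `[aL, aU] ≤_LU [bL, bU]`. -/
def LUle (aL aU bL bU : ℝ) : Prop := aL ≤ bL ∧ aU ≤ bU

/-- `[aL, aU] <_LU [bL, bU]`. -/
def LUlt (aL aU bL bU : ℝ) : Prop := LUle aL aU bL bU ∧ (aL ≠ bL ∨ aU ≠ bU)

/-- `[aL, aU] ≤_CW [bL, bU]`. -/
def CWle (aL aU bL bU : ℝ) : Prop :=
  (aL + aU) / 2 ≤ (bL + bU) / 2 ∧ (aU - aL) / 2 ≤ (bU - bL) / 2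

/-- `[aL, aU] <_CW [bL, bU]`. -/
def CWlt (aL aU bL bU : ℝ) : Prop := CWle aL aU bL bU ∧ (aL ≠ bL ∨ aU ≠ bU)

lemma dirDeriv_le_of_convexAtPt {V : Type*} [NormedAddCommGroup V] [NormedSpace ℝ V]
    (E : Set V) (f : V → ℝ) (pbar q : V) (hq : q ∈ E) (d : ℝ)
    (hd : HasDirDeriv f pbar (q - pbar) d) (hc : ConvexAtPt E f pbar) :
    d ≤ f q - f pbar := by
  refine le_of_tendsto hd ?_
  filter_upwards [Ioo_mem_nhdsGT_of_mem (by norm_num : (0:ℝ) ∈ Set.Ico 0 1)] with α hα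
  have h1 := hc q hq α hα.1.le hα.2.le
  have hx : pbar + α • (q - pbar) = (1 - α) • pbar + α • q := by
    rw [smul_sub, sub_smul, one_smul]; abel
  rw [hx, div_le_iff₀ hα.1]
  nlinarith [h1]

/-- Theorem 3.2(c), Euclidean case: CW-convex objectives with
LU-type KKT multipliers satisfying `λ^L < λ^U` yield a type-II Pareto optimal
solution of (MIVOP2). -/
theorem kkt_type_II_CW_convex_LU_multipliers
    {V : Type*} [NormedAddCommGroup V] [NormedSpace ℝ V]
    (E : Set V) (hEne : E.Nonempty) (hEopen : IsOpen E) (hEconv : Convex ℝ E)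
    (l t : ℕ) (φL φU : Fin l → V → ℝ) (ψ : Fin t → V → ℝ)
    (hφint : ∀ s, ∀ x ∈ E, φL s x ≤ φU s x)
    (pbar : V) (hpbarE : pbar ∈ E) (hpbarF : ∀ u, ψ u pbar ≤ 0)
    (φL' φU' : Fin l → V → ℝ)
    (hφLd : ∀ s w, HasDirDeriv (φL s) pbar w (φL' s w))
    (hφUd : ∀ s w, HasDirDeriv (φU s) pbar w (φU' s w))
    (ψ' : Fin t → V → ℝ)
    (hψd : ∀ u w, HasDirDeriv (ψ u) pbar w (ψ' u w))
    -- CW-convexity of the objectives at `pbar`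
    (hφCc : ∀ s, ConvexAtPt E (fun x => (φL s x + φU s x) / 2) pbar)
    (hφWc : ∀ s, ConvexAtPt E (fun x => (φU s x - φL s x) / 2) pbar)
    (hψc : ∀ u, ConvexAtPt E (ψ u) pbar)
    (lamL lamU : Fin l → ℝ) (μ : Fin t → ℝ)
    (hlamL : ∀ s, 0 < lamL s) (hlamU : ∀ s, 0 < lamU s) (hμ : ∀ u, 0 ≤ μ u)
    (hlamLU : ∀ s, lamL s < lamU s)
    (hkkt : ∀ p ∈ E,
      0 ≤ ∑ s, lamL s * φL' s (p - pbar) + ∑ s, lamU s * φU' s (p - pbar)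
          + ∑ u, μ u * ψ' u (p - pbar))
    (hcs : ∀ u, μ u * ψ u pbar = 0) :
    ¬ ∃ phat, (phat ∈ E ∧ ∀ u, ψ u phat ≤ 0) ∧
      (∀ s, CWle (φL s phat) (φU s phat) (φL s pbar) (φU s pbar)) ∧
      (∃ h, CWlt (φL h phat) (φU h phat) (φL h pbar) (φU h pbar)) := by
  rintro ⟨phat, ⟨hpE, hpF⟩, hle, h, hlt⟩
  set w := phat - pbar with hw
  -- directional derivative of the center function
  have hC : ∀ s, (φL' s w + φU' s w) / 2 ≤
      (φL s phat + φU s phat) / 2 - (φL s pbar + φU s pbar) / 2 := by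
    intro s
    refine dirDeriv_le_of_convexAtPt E _ pbar phat hpE _ ?_ (hφCc s)
    have hcomb := ((hφLd s w).add (hφUd s w)).div_const 2
    exact Filter.Tendsto.congr (fun α => by simp only; ring) hcomb
  have hW : ∀ s, (φU' s w - φL' s w) / 2 ≤
      (φU s phat - φL s phat) / 2 - (φU s pbar - φL s pbar) / 2 := by
    intro s
    refine dirDeriv_le_of_convexAtPt E _ pbar phat hpE _ ?_ (hφWc s)
    have hcomb := ((hφUd s w).sub (hφLd s w)).div_const 2
    exact Filter.Tendsto.congr (fun α => by simp only; ring) hcomb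
  have hψle : ∀ u, ψ' u w ≤ ψ u phat - ψ u pbar := fun u =>
    dirDeriv_le_of_convexAtPt E _ pbar phat hpE _ (hψd u w) (hψc u)
  -- per-index bounds
  set ΔC : Fin l → ℝ := fun s =>
    (φL s phat + φU s phat) / 2 - (φL s pbar + φU s pbar) / 2 with hΔC
  set ΔW : Fin l → ℝ := fun s =>
    (φU s phat - φL s phat) / 2 - (φU s pbar - φL s pbar) / 2 with hΔW
  have hΔCnp : ∀ s, ΔC s ≤ 0 := fun s => by
    have := (hle s).1; simp only [hΔC]; linarith
  have hΔWnp : ∀ s, ΔW s ≤ 0 := fun s => by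
    have := (hle s).2; simp only [hΔW]; linarith
  have key : ∀ s, lamL s * φL' s w + lamU s * φU' s w ≤
      (lamL s + lamU s) * ΔC s + (lamU s - lamL s) * ΔW s := by
    intro s
    have ha := mul_le_mul_of_nonneg_left (hC s)
      (by linarith [hlamL s, hlamU s] : (0:ℝ) ≤ lamL s + lamU s)
    have hb := mul_le_mul_of_nonneg_left (hW s)
      (by linarith [hlamLU s] : (0:ℝ) ≤ lamU s - lamL s)
    simp only [hΔC, hΔW]
    nlinarith [ha, hb]
  have hbound_np : ∀ s, (lamL s + lamU s) * ΔC s + (lamU s - lamL s) * ΔW s ≤ 0 := by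
    intro s
    have h1 : (lamL s + lamU s) * ΔC s ≤ 0 :=
      mul_nonpos_of_nonneg_of_nonpos (by linarith [hlamL s, hlamU s]) (hΔCnp s)
    have h2 : (lamU s - lamL s) * ΔW s ≤ 0 :=
      mul_nonpos_of_nonneg_of_nonpos (by linarith [hlamLU s]) (hΔWnp s)
    linarith
  -- strictness at index h
  have hstrict : (lamL h + lamU h) * ΔC h + (lamU h - lamL h) * ΔW h < 0 := by
    have hne : ΔC h < 0 ∨ ΔW h < 0 := by
      by_contra hcon
      push_neg at hcon
      have h1 : ΔC h = 0 := le_antisymm (hΔCnp h) hcon.1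
      have h2 : ΔW h = 0 := le_antisymm (hΔWnp h) hcon.2
      simp only [hΔC, hΔW] at h1 h2
      rcases hlt.2 with hne | hne <;> exact hne (by linarith)
    rcases hne with hne | hne
    · have h1 : (lamL h + lamU h) * ΔC h < 0 :=
        mul_neg_of_pos_of_neg (by linarith [hlamL h, hlamU h]) hne
      have h2 : (lamU h - lamL h) * ΔW h ≤ 0 :=
        mul_nonpos_of_nonneg_of_nonpos (by linarith [hlamLU h]) (hΔWnp h)
      linarith
    · have h1 : (lamL h + lamU h) * ΔC h ≤ 0 :=
        mul_nonpos_of_nonneg_of_nonpos (by linarith [hlamL h, hlamU h]) (hΔCnp h)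
      have h2 : (lamU h - lamL h) * ΔW h < 0 :=
        mul_neg_of_pos_of_neg (by linarith [hlamLU h]) hne
      linarith
  -- sum of objective terms is negative
  have hsum1 : ∑ s, (lamL s * φL' s w + lamU s * φU' s w) < 0 := by
    calc ∑ s, (lamL s * φL' s w + lamU s * φU' s w)
        ≤ ∑ s, ((lamL s + lamU s) * ΔC s + (lamU s - lamL s) * ΔW s) :=
          Finset.sum_le_sum (fun s _ => key s)
      _ < ∑ _s : Fin l, (0:ℝ) :=
          Finset.sum_lt_sum (fun s _ => hbound_np s) ⟨h, Finset.mem_univ h, hstrict⟩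
      _ = 0 := by simp
  -- constraint terms are nonpositive
  have hsum2 : ∑ u, μ u * ψ' u w ≤ 0 := by
    refine Finset.sum_nonpos (fun u _ => ?_)
    have h1 : μ u * ψ' u w ≤ μ u * (ψ u phat - ψ u pbar) :=
      mul_le_mul_of_nonneg_left (hψle u) (hμ u)
    have h2 : μ u * ψ u phat ≤ 0 := mul_nonpos_of_nonneg_of_nonpos (hμ u) (hpF u)
    have h3 := hcs u
    nlinarith
  have hk := hkkt phat hpE
  rw [← hw] at hk
  rw [Finset.sum_add_distrib] at hsum1
  linarith
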